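/- Let w, w' ∈ W_n^{(k)} be such that w covers w'. Then the pair (w,w') is of type B3 if and only if the dual pair ((w')∨, w∨) is of type B4. -/

import Mathlib

/-- The hyperoctahedral group `W_n`: bijections `w : ℤ → ℤ` with `w (-i) = -w i`
and `w i = i` whenever `n < |i|`. -/
def SignedPerm (n : ℕ) (w : ℤ → ℤ) : Prop :=
  Function.Bijective w ∧ (∀ i : ℤ, w (-i) = -w i) ∧ (∀ i : ℤ, (n : ℤ) < |i| → w i = i)

/-- The number of inversions `#{(i,j) : 1 ≤ i < j ≤ n, w i > w j}`. -/
noncomputable def invCount (n : ℕ) (w : ℤ → ℤ) : ℕ :=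
  ((Finset.Icc (1 : ℤ) (n : ℤ) ×ˢ Finset.Icc (1 : ℤ) (n : ℤ)).filter
    (fun p => p.1 < p.2 ∧ w p.2 < w p.1)).card

/-- The length `ℓ(w) = inv(w) - Σ_{1 ≤ j ≤ n, w j < 0} w j`. -/
noncomputable def len (n : ℕ) (w : ℤ → ℤ) : ℤ :=
  (invCount n w : ℤ) - ∑ j ∈ (Finset.Icc (1 : ℤ) (n : ℤ)).filter (fun j => w j < 0), w j

/-- `w` is `k`-Grassmannian: `0 < w 1 < ⋯ < w k` and `w (k+1) < ⋯ < w n`. -/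
def Grassmannian (n k : ℕ) (w : ℤ → ℤ) : Prop :=
  SignedPerm n w ∧
  (∀ i : ℤ, 1 ≤ i → i ≤ (k : ℤ) → 0 < w i) ∧
  (∀ i j : ℤ, 1 ≤ i → i < j → j ≤ (k : ℤ) → w i < w j) ∧
  (∀ i j : ℤ, (k : ℤ) < i → i < j → j ≤ (n : ℤ) → w i < w j)

/-- A reflection of `W_n`: either the transposition pair `(i j)(-i -j)` with
`1 ≤ i < |j| ≤ n`, or the sign change `i ↔ -i` with `1 ≤ i ≤ n`. -/
def IsReflection (n : ℕ) (t : ℤ → ℤ) : Prop :=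
  (∃ i j : ℤ, 1 ≤ i ∧ i < |j| ∧ |j| ≤ (n : ℤ) ∧
    t = fun m => if m = i then j else if m = j then i
      else if m = -i then -j else if m = -j then -i else m) ∨
  (∃ i : ℤ, 1 ≤ i ∧ i ≤ (n : ℤ) ∧
    t = fun m => if m = i then -i else if m = -i then i else m)

/-- `w` covers `w'` in the Bruhat order: `w' = w ∘ t` for a reflection `t` and
`ℓ(w) = ℓ(w') + 1`. -/
def Covers (n : ℕ) (w w' : ℤ → ℤ) : Prop :=
  ∃ t : ℤ → ℤ, IsReflection n t ∧ w' = w ∘ t ∧ len n w = len n w' + 1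

/-- Multiset of entries of `w` at positions `1, …, k`. -/
noncomputable def entriesLow (k : ℕ) (w : ℤ → ℤ) : Multiset ℤ :=
  (Finset.Icc (1 : ℤ) (k : ℤ)).val.map w

/-- Multiset of entries of `w` at positions `k+1, …, n`. -/
noncomputable def entriesHigh (n k : ℕ) (w : ℤ → ℤ) : Multiset ℤ :=
  (Finset.Icc ((k : ℤ) + 1) (n : ℤ)).val.map w

/-- `d_i = #{j : λ_j > u_i}`, the number of negative entries of `w` at positions `> k`
whose absolute value exceeds `w i`. -/
noncomputable def dcount (n k : ℕ) (w : ℤ → ℤ) (i : ℤ) : ℕ :=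
  ((Finset.Icc ((k : ℤ) + 1) (n : ℤ)).filter (fun j => w j < 0 ∧ w i < -(w j))).card

/-- `μ_i = #{j : v_j > u_i}`, the number of positive entries of `w` at positions `> k`
exceeding `w i`. -/
noncomputable def mucount (n k : ℕ) (w : ℤ → ℤ) (i : ℤ) : ℕ :=
  ((Finset.Icc ((k : ℤ) + 1) (n : ℤ)).filter (fun j => 0 < w j ∧ w i < w j)).card

/-- `α_i = u_i - i + d_i`. -/
noncomputable def alphaPart (n k : ℕ) (w : ℤ → ℤ) (i : ℤ) : ℤ :=
  w i - i + (dcount n k w i : ℤ)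

/-- Pair of type B1: `w'` is obtained from `w` by replacing the entry `-1`
(at a position `> k`) by `1`. -/
def TypeB1 (n k : ℕ) (w w' : ℤ → ℤ) : Prop :=
  Grassmannian n k w ∧ Grassmannian n k w' ∧
  (-1 : ℤ) ∈ entriesHigh n k w ∧
  entriesLow k w' = entriesLow k w ∧
  entriesHigh n k w' = 1 ::ₘ (entriesHigh n k w).erase (-1)

/-- Pair of type B2: for some `a > 1`, `w'` is obtained from `w` by replacing the
entries `-a` and `a-1` (at positions `> k`) by `-(a-1)` and `a`. -/
def TypeB2 (n k : ℕ) (w w' : ℤ → ℤ) : Prop :=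
  Grassmannian n k w ∧ Grassmannian n k w' ∧
  ∃ a : ℤ, 1 < a ∧ (-a) ∈ entriesHigh n k w ∧ (a - 1) ∈ entriesHigh n k w ∧
    entriesLow k w' = entriesLow k w ∧
    entriesHigh n k w' =
      a ::ₘ (-(a - 1)) ::ₘ (((entriesHigh n k w).erase (-a)).erase (a - 1))

/-- Pair of type B3: for some `a > x > 0`, `w'` is obtained from `w` by exchanging
the entry `a` (at a position `≤ k`) with the entry `a - x` (at a position `> k`). -/
def TypeB3 (n k : ℕ) (w w' : ℤ → ℤ) : Prop :=
  Grassmannian n k w ∧ Grassmannian n k w' ∧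
  ∃ a x : ℤ, 0 < x ∧ x < a ∧
    a ∈ entriesLow k w ∧ (a - x) ∈ entriesHigh n k w ∧
    entriesLow k w' = (a - x) ::ₘ (entriesLow k w).erase a ∧
    entriesHigh n k w' = a ::ₘ (entriesHigh n k w).erase (a - x)

/-- Pair of type B4: for some `a > x > 0`, `w'` is obtained from `w` by replacing
the entry `a - x` (at a position `≤ k`) by `a` and the entry `-a` (at a position `> k`)
by `-(a-x)`. -/
def TypeB4 (n k : ℕ) (w w' : ℤ → ℤ) : Prop :=
  Grassmannian n k w ∧ Grassmannian n k w' ∧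
  ∃ a x : ℤ, 0 < x ∧ x < a ∧
    (a - x) ∈ entriesLow k w ∧ (-a) ∈ entriesHigh n k w ∧
    entriesLow k w' = a ::ₘ (entriesLow k w).erase (a - x) ∧
    entriesHigh n k w' = (-(a - x)) ::ₘ (entriesHigh n k w).erase (-a)

/-- The longest element `w₀` of `W_n^{(k)}`: `w₀ i = i` for `1 ≤ i ≤ k` and
`w₀ i = -(n + k + 1 - i)` for `k < i ≤ n` (extended to a signed permutation of `ℤ`). -/
def w0 (n k : ℕ) : ℤ → ℤ := fun i =>
  if (k : ℤ) < i ∧ i ≤ (n : ℤ) then -((n : ℤ) + (k : ℤ) + 1 - i)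
  else if -(n : ℤ) ≤ i ∧ i < -(k : ℤ) then (n : ℤ) + (k : ℤ) + 1 + i
  else i

/-- The simple reflection `s_i`: for `i = 0` the sign change `1 ↔ -1`, and for `i ≥ 1`
the swap `i ↔ i+1`, `-i ↔ -(i+1)`. -/
def simpleRefl (i : ℕ) : ℤ → ℤ :=
  if i = 0 then fun m => if m = 1 then -1 else if m = -1 then 1 else m
  else fun m =>
    if m = (i : ℤ) then (i : ℤ) + 1 else if m = (i : ℤ) + 1 then (i : ℤ)
    else if m = -(i : ℤ) then -(i : ℤ) - 1 else if m = -(i : ℤ) - 1 then -(i : ℤ) else m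


lemma w0_low (n k : ℕ) (i : ℤ) (h1 : 1 ≤ i) (h2 : i ≤ (k : ℤ)) : w0 n k i = i := by
  simp only [w0]; split_ifs <;> omega

lemma w0_high (n k : ℕ) (i : ℤ) (h1 : (k : ℤ) < i) (h2 : i ≤ (n : ℤ)) :
    w0 n k i = -((n : ℤ) + (k : ℤ) + 1 - i) := by
  simp only [w0]; split_ifs <;> omega

lemma w0_invol (n k : ℕ) : Function.Involutive (w0 n k) := by
  intro i; simp only [w0]; split_ifs <;> omega

lemma w0_odd (n k : ℕ) (i : ℤ) : w0 n k (-i) = -(w0 n k i) := by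
  simp only [w0]; split_ifs <;> omega

lemma w0_large (n k : ℕ) (i : ℤ) (h : (n : ℤ) < |i|) : w0 n k i = i := by
  rcases lt_abs.mp h with h' | h' <;> · simp only [w0]; split_ifs <;> omega

lemma entriesLow_dual (n k : ℕ) (v : ℤ → ℤ) :
    entriesLow k (v ∘ w0 n k) = entriesLow k v := by
  unfold entriesLow
  refine Multiset.map_congr rfl fun i hi => ?_
  rw [Finset.mem_val, Finset.mem_Icc] at hi
  simp only [Function.comp_apply, w0_low n k i hi.1 hi.2]

lemma Icc_reflect (n k : ℕ) :
    (Finset.Icc ((k : ℤ) + 1) (n : ℤ)).val.map (fun j => (n : ℤ) + (k : ℤ) + 1 - j)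
      = (Finset.Icc ((k : ℤ) + 1) (n : ℤ)).val := by
  have hinj : Function.Injective (fun j : ℤ => (n : ℤ) + (k : ℤ) + 1 - j) := by
    intro x y h; simpa using h
  have : Finset.map ⟨fun j : ℤ => (n : ℤ) + (k : ℤ) + 1 - j, hinj⟩
      (Finset.Icc ((k : ℤ) + 1) (n : ℤ)) = Finset.Icc ((k : ℤ) + 1) (n : ℤ) := by
    ext m
    simp only [Finset.mem_map, Finset.mem_Icc, Function.Embedding.coeFn_mk]
    constructor
    · rintro ⟨x, hx, rfl⟩; omega
    · intro hm; exact ⟨(n : ℤ) + (k : ℤ) + 1 - m, by omega, by omega⟩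
  have h2 := congrArg Finset.val this
  rwa [Finset.map_val] at h2

lemma negInj : Function.Injective (fun y : ℤ => -y) := fun u v h => by simpa using h

lemma entriesHigh_dual (n k : ℕ) (v : ℤ → ℤ) (hodd : ∀ i : ℤ, v (-i) = -v i) :
    entriesHigh n k (v ∘ w0 n k) = (entriesHigh n k v).map (fun x => -x) := by
  unfold entriesHigh
  rw [Multiset.map_map]
  calc (Finset.Icc ((k : ℤ) + 1) (n : ℤ)).val.map (v ∘ w0 n k)
      = (Finset.Icc ((k : ℤ) + 1) (n : ℤ)).val.map
          (((fun x => -x) ∘ v) ∘ (fun j => (n : ℤ) + (k : ℤ) + 1 - j)) := by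
        refine Multiset.map_congr rfl fun i hi => ?_
        rw [Finset.mem_val, Finset.mem_Icc] at hi
        simp only [Function.comp_apply, w0_high n k i (by omega) hi.2]
        rw [← hodd]
    _ = ((Finset.Icc ((k : ℤ) + 1) (n : ℤ)).val.map
          (fun j => (n : ℤ) + (k : ℤ) + 1 - j)).map ((fun x => -x) ∘ v) := by
        rw [Multiset.map_map]
    _ = (Finset.Icc ((k : ℤ) + 1) (n : ℤ)).val.map ((fun x => -x) ∘ v) := by
        rw [Icc_reflect]

lemma grass_dual (n k : ℕ) (v : ℤ → ℤ) (hv : Grassmannian n k v) :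
    Grassmannian n k (v ∘ w0 n k) := by
  obtain ⟨⟨hbij, hodd, hfix⟩, hpos, hlow, hhigh⟩ := hv
  refine ⟨⟨hbij.comp (w0_invol n k).bijective, ?_, ?_⟩, ?_, ?_, ?_⟩
  · intro i; simp only [Function.comp_apply, w0_odd, hodd]
  · intro i hi
    simp only [Function.comp_apply, w0_large n k i hi]
    exact hfix i hi
  · intro i h1 h2
    simp only [Function.comp_apply, w0_low n k i h1 h2]
    exact hpos i h1 h2
  · intro i j h1 h2 h3
    simp only [Function.comp_apply, w0_low n k i h1 (by omega), w0_low n k j (by omega) h3]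
    exact hlow i j h1 h2 h3
  · intro i j h1 h2 h3
    simp only [Function.comp_apply, w0_high n k i h1 (by omega),
      w0_high n k j (by omega) h3, hodd]
    have := hhigh ((n : ℤ) + (k : ℤ) + 1 - j) ((n : ℤ) + (k : ℤ) + 1 - i)
      (by omega) (by omega) (by omega)
    omega

/-- if `w` covers `w'`, then `(w, w')` is of type B3 iff the dual pair
`((w')∨, w∨)` is of type B4. -/
theorem stmt_18 (n k : ℕ) (hn : 1 ≤ n) (hk : k ≤ n) (w w' : ℤ → ℤ)
    (hw : Grassmannian n k w) (hw' : Grassmannian n k w')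
    (hcov : Covers n w w') :
    TypeB3 n k w w' ↔ TypeB4 n k (w' ∘ w0 n k) (w ∘ w0 n k) := by
  constructor
  · rintro ⟨hgw, hgw', a, x, hx, hxa, haL, haxH, hL', hH'⟩
    refine ⟨grass_dual n k w' hgw', grass_dual n k w hgw, a, x, hx, hxa, ?_, ?_, ?_, ?_⟩
    · rw [entriesLow_dual, hL']; exact Multiset.mem_cons_self _ _
    · rw [entriesHigh_dual n k w' hw'.1.2.1, hH']
      exact Multiset.mem_map_of_mem _ (Multiset.mem_cons_self _ _)
    · rw [entriesLow_dual, entriesLow_dual, hL', Multiset.erase_cons_head]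
      exact (Multiset.cons_erase haL).symm
    · rw [entriesHigh_dual n k w hw.1.2.1, entriesHigh_dual n k w' hw'.1.2.1, hH',
        Multiset.map_cons, Multiset.erase_cons_head]
      exact (congrArg (Multiset.map (fun y : ℤ => -y))
        (Multiset.cons_erase haxH)).symm.trans (Multiset.map_cons _ _ _)
  · rintro ⟨_, _, a, x, hx, hxa, haxL, haH, hL, hH⟩
    rw [entriesLow_dual] at haxL
    rw [entriesLow_dual, entriesLow_dual] at hL
    rw [entriesHigh_dual n k w' hw'.1.2.1] at haH
    rw [entriesHigh_dual n k w hw.1.2.1, entriesHigh_dual n k w' hw'.1.2.1] at hH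
    have haH' : a ∈ entriesHigh n k w' := by
      obtain ⟨b, hb, hb2⟩ := Multiset.mem_map.mp haH
      have : b = a := by omega
      rwa [this] at hb
    have hHigh : entriesHigh n k w = (a - x) ::ₘ (entriesHigh n k w').erase a := by
      apply Multiset.map_injective (f := fun y : ℤ => -y) negInj
      rw [hH, Multiset.map_cons, ← Multiset.map_erase (fun y : ℤ => -y) negInj]
    refine ⟨hw, hw', a, x, hx, hxa, ?_, ?_, ?_, ?_⟩
    · rw [hL]; exact Multiset.mem_cons_self _ _
    · rw [hHigh]; exact Multiset.mem_cons_self _ _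
    · rw [hL, Multiset.erase_cons_head]
      exact (Multiset.cons_erase haxL).symm
    · rw [hHigh, Multiset.erase_cons_head]
      exact (Multiset.cons_erase haH').symm
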